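/- arXiv:1602.01964 — 2 statements merged into one kernel-verified Lean document; each statement's English description precedes it below -/
import Mathlib

section
/- Let ω(ζ) = (1/π)·arg(i·(1−ζ)/(1+ζ)) − 1 be the harmonic measure of the upper semicircle γ = {e^{iφ} : φ ∈ [0,π]} with respect to the unit disc. Fix 0 < α < π/2 and let Ω be the set of points ζ in the closed unit disc of the form ζ = 1 + r·e^{iθ} with r > 0 and π/2 ≤ θ ≤ π/2 + α. Then ω(ζ) ≤ −1 + α/π for all ζ ∈ Ω ∩ 𝔻. -/
open Metric

/-- Average of `u` over the circle of center `c` and radius `r`. -/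
noncomputable def circleAvg (u : ℂ → ℝ) (c : ℂ) (r : ℝ) : ℝ :=
  (1 / (2 * Real.pi)) * ∫ θ in (0:ℝ)..(2 * Real.pi), u (c + r * Complex.exp (θ * Complex.I))

/-- Harmonic on `s`: continuous and satisfying the mean value property. -/
def HarmonicOn' (f : ℂ → ℝ) (s : Set ℂ) : Prop :=
  ContinuousOn f s ∧ ∀ c r, 0 < r → Metric.closedBall c r ⊆ s → f c = circleAvg f c r

/-- The harmonic measure of the upper semicircle with respect to the unit disc,
formula (3.6): ω(ζ) = (1/π)·arg(i(1−ζ)/(1+ζ)) − 1. -/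
noncomputable def omegaUp (ζ : ℂ) : ℝ :=
  (1 / Real.pi) * Complex.arg (Complex.I * (1 - ζ) / (1 + ζ)) - 1

set_option maxHeartbeats 1000000 in
/-- Inequality (3.7): in the sector at the boundary point 1 with opening α
(lines through 1 at angles in [π/2, π/2+α]), ω ≤ −1 + α/π. -/
theorem stmt_8 (α : ℝ) (hα0 : 0 < α) (hα1 : α < Real.pi / 2) :
    ∀ ζ ∈ Metric.ball (0:ℂ) 1,
      (∃ r : ℝ, 0 < r ∧ ∃ θ ∈ Set.Icc (Real.pi / 2) (Real.pi / 2 + α),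
        ζ = 1 + (r : ℂ) * Complex.exp (θ * Complex.I)) →
      omegaUp ζ ≤ -1 + α / Real.pi := by
  intro ζ hζ hex
  obtain ⟨r, hr, θ, hθ, hζeq⟩ := hex
  have hπ : 0 < Real.pi := Real.pi_pos
  set φ : ℝ := θ - Real.pi / 2 with hφdef
  have hφ0 : 0 ≤ φ := by have := hθ.1; simp only [hφdef]; linarith
  have hφα : φ ≤ α := by have := hθ.2; simp only [hφdef]; linarith
  have hφlt : φ < Real.pi / 2 := lt_of_le_of_lt hφα hα1
  have hcosφ : 0 < Real.cos φ :=
    Real.cos_pos_of_mem_Ioo ⟨lt_of_lt_of_le (by linarith : -(Real.pi/2) < 0) hφ0, hφlt⟩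
  have hθeq : θ = φ + Real.pi / 2 := by simp [hφdef]
  have hexp_re : (Complex.exp ((θ : ℂ) * Complex.I)).re = - Real.sin φ := by
    rw [Complex.exp_ofReal_mul_I_re, hθeq, Real.cos_add_pi_div_two]
  have hexp_im : (Complex.exp ((θ : ℂ) * Complex.I)).im = Real.cos φ := by
    rw [Complex.exp_ofReal_mul_I_im, hθeq, Real.sin_add_pi_div_two]
  -- components of ζ
  have hζre : ζ.re = 1 - r * Real.sin φ := by
    rw [hζeq]
    simp [Complex.add_re, Complex.mul_re, hexp_re, hexp_im]
    ring
  have hζim : ζ.im = r * Real.cos φ := by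
    rw [hζeq]
    simp [Complex.add_im, Complex.mul_im, hexp_re, hexp_im]
  -- denominator is nonzero
  have habs : ‖ζ‖ < 1 := by simpa [Complex.dist_eq] using hζ
  have hzre : 0 < (1 + ζ).re := by
    have h1 : |ζ.re| ≤ ‖ζ‖ := Complex.abs_re_le_norm ζ
    have h2 : -1 < ζ.re := by
      have := neg_abs_le ζ.re; linarith
    simpa using by linarith
  set u : ℂ := Complex.I * (1 - ζ) / (1 + ζ) with hu
  set N : ℝ := Complex.normSq (1 + ζ) with hN
  have hNpos : 0 < N := by
    have : (1 + ζ) ≠ 0 := by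
      intro h
      rw [h] at hzre; simp at hzre
    exact Complex.normSq_pos.mpr this
  -- components of u
  have hwre : (Complex.I * (1 - ζ)).re = r * Real.cos φ := by
    simp [hζim]
  have hwim : (Complex.I * (1 - ζ)).im = r * Real.sin φ := by
    simp [hζre]
  have hzre' : (1 + ζ).re = 2 - r * Real.sin φ := by
    simp [hζre]; ring
  have hzim' : (1 + ζ).im = r * Real.cos φ := by simp [hζim]
  have hsc : Real.sin φ ^ 2 + Real.cos φ ^ 2 = 1 := Real.sin_sq_add_cos_sq φ
  have hure : u.re = 2 * r * Real.cos φ / N := by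
    rw [hu, Complex.div_re, hwre, hwim, hzre', hzim', ← hN]
    field_simp
    nlinarith [hsc]
  have huim : u.im = (2 * r * Real.sin φ - r ^ 2) / N := by
    rw [hu, Complex.div_im, hwre, hwim, hzre', hzim', ← hN]
    field_simp
    nlinarith [hsc]
  have hurepos : 0 < u.re := by
    rw [hure]; positivity
  have hB : (2 : ℝ) * r * Real.cos φ ≠ 0 := by positivity
  -- tan of arg
  have htan : Real.tan u.arg = (2 * r * Real.sin φ - r ^ 2) / (2 * r * Real.cos φ) := by
    have hN0 : N ≠ 0 := ne_of_gt hNpos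
    rw [Complex.tan_arg, hure, huim]
    field_simp
  have htanle : Real.tan u.arg ≤ Real.tan α := by
    rw [htan]
    have h1 : (2 * r * Real.sin φ - r ^ 2) / (2 * r * Real.cos φ) ≤ Real.sin φ / Real.cos φ := by
      rw [div_le_div_iff₀ (by positivity) hcosφ]
      nlinarith [mul_nonneg (sq_nonneg r) hcosφ.le]
    have h2 : Real.sin φ / Real.cos φ ≤ Real.tan α := by
      rw [← Real.tan_eq_sin_div_cos]
      rcases eq_or_lt_of_le hφα with h | h
      · rw [h]
      · exact le_of_lt (Real.tan_lt_tan_of_nonneg_of_lt_pi_div_two hφ0 hα1 h)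
    linarith
  -- arg u ∈ (-π/2, π/2)
  have hargmem : u.arg ∈ Set.Ioo (-(Real.pi / 2)) (Real.pi / 2) := by
    have := Complex.abs_arg_lt_pi_div_two_iff.mpr (Or.inl hurepos)
    exact abs_lt.mp this
  have hαmem : α ∈ Set.Ioo (-(Real.pi / 2)) (Real.pi / 2) :=
    ⟨by linarith, hα1⟩
  have harg : u.arg ≤ α :=
    (Real.strictMonoOn_tan.le_iff_le hargmem hαmem).mp htanle
  -- conclude
  have hmul : (1 / Real.pi) * u.arg ≤ (1 / Real.pi) * α := by
    apply mul_le_mul_of_nonneg_left harg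
    positivity
  have heq : (1 / Real.pi) * α = α / Real.pi := by ring
  show (1 / Real.pi) * Complex.arg (Complex.I * (1 - ζ) / (1 + ζ)) - 1 ≤ -1 + α / Real.pi
  rw [← hu]
  linarith
end

section
/- Two constants theorem: let u be subharmonic on the open unit disc 𝔻 and upper semicontinuous on the closed disc, with u ≤ C on the closed disc and limsup_{ζ→τ} u(ζ) ≤ 0 for every τ in the open upper semicircle γ° = {e^{iφ} : 0 < φ < π}. Then u(ζ) ≤ C·(ω(ζ) + 1) for all ζ ∈ 𝔻, where ω(ζ) = (1/π)·arg(i·(1−ζ)/(1+ζ)) − 1 is the harmonic measure of the upper semicircle. -/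
open Metric

/-- u is subharmonic on s: upper semicontinuous and satisfying the
sub-mean value inequality. -/
def SubharmonicOn' (u : ℂ → ℝ) (s : Set ℂ) : Prop :=
  UpperSemicontinuousOn u s ∧
    ∀ c r, 0 < r → Metric.closedBall c r ⊆ s → u c ≤ circleAvg u c r

open Filter

/-- Mean value property for real parts of holomorphic functions. -/
lemma holo_mean {F : ℂ → ℂ} {c : ℂ} {r : ℝ} (hr : 0 < r)
    (hF : DifferentiableOn ℂ F (Metric.closedBall c r)) :
    (F c).re = circleAvg (fun ζ => (F ζ).re) c r := by
  have hdcc : DiffContOnCl ℂ F (ball c r) :=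
    ⟨hF.mono ball_subset_closedBall, hF.continuousOn.mono closure_ball_subset_closedBall⟩
  have h1 := hdcc.circleIntegral_sub_inv_smul (mem_ball_self hr)
  have hcont : ContinuousOn (fun θ : ℝ => F (circleMap c r θ)) (Set.uIcc 0 (2 * Real.pi)) := by
    apply hF.continuousOn.comp (continuous_circleMap c r).continuousOn
    intro θ _
    exact sphere_subset_closedBall (circleMap_mem_sphere c hr.le θ)
  have hint : IntervalIntegrable (fun θ : ℝ => F (circleMap c r θ)) MeasureTheory.volume 0 (2 * Real.pi) :=
    hcont.intervalIntegrable
  rw [circleIntegral] at h1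
  have h2 : ∀ θ : ℝ, deriv (circleMap c r) θ • (circleMap c r θ - c)⁻¹ • F (circleMap c r θ)
      = Complex.I * F (circleMap c r θ) := by
    intro θ
    rw [deriv_circleMap, circleMap_sub_center, smul_eq_mul, smul_eq_mul]
    have hz : circleMap 0 r θ ≠ 0 := circleMap_ne_center hr.ne'
    field_simp
  simp only [h2] at h1
  rw [intervalIntegral.integral_const_mul] at h1
  have h3 : (∫ θ in (0:ℝ)..(2 * Real.pi), F (circleMap c r θ)) = (2 * Real.pi) * F c := by
    have hI : (Complex.I : ℂ) ≠ 0 := Complex.I_ne_zero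
    apply mul_left_cancel₀ hI
    rw [h1, smul_eq_mul]; ring
  have h4 : (∫ θ in (0:ℝ)..(2 * Real.pi), (F (circleMap c r θ)).re)
      = ((∫ θ in (0:ℝ)..(2 * Real.pi), F (circleMap c r θ))).re := by
    exact (Complex.reCLM.intervalIntegral_comp_comm hint)
  have hpi : Real.pi ≠ 0 := Real.pi_ne_zero
  unfold circleAvg
  have : ∀ θ : ℝ, c + (r:ℂ) * Complex.exp (θ * Complex.I) = circleMap c r θ := fun θ => rfl
  simp only [this]
  rw [h4, h3]
  simp [Complex.ofReal_mul]
  field_simp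

/-- Maximum principle for subharmonic functions on the unit disc with boundary control. -/
lemma maxp {v : ℂ → ℝ} {B : ℝ}
    (husc : UpperSemicontinuousOn v (ball (0:ℂ) 1))
    (hsub : ∀ c r, 0 < r → closedBall c r ⊆ ball (0:ℂ) 1 → v c ≤ circleAvg v c r)
    (hB : ∀ ζ ∈ ball (0:ℂ) 1, v ζ ≤ B)
    (hbdry : ∀ τ ∈ sphere (0:ℂ) 1, ∀ m : ℝ, 0 < m →
      ∀ᶠ ζ in nhdsWithin τ (ball (0:ℂ) 1), v ζ < m) :
    ∀ ζ ∈ ball (0:ℂ) 1, v ζ ≤ 0 := by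
  by_contra hcon
  push_neg at hcon
  obtain ⟨ζ₀, hζ₀b, hζ₀⟩ := hcon
  set S : Set ℝ := v '' ball (0:ℂ) 1 with hS
  have hSne : S.Nonempty := ⟨v ζ₀, ζ₀, hζ₀b, rfl⟩
  have hSbdd : BddAbove S := ⟨B, by rintro x ⟨ζ, hζ, rfl⟩; exact hB ζ hζ⟩
  set M : ℝ := sSup S with hMdef
  have hle : ∀ ζ ∈ ball (0:ℂ) 1, v ζ ≤ M := fun ζ hζ => le_csSup hSbdd ⟨ζ, hζ, rfl⟩
  have hM : 0 < M := lt_of_lt_of_le hζ₀ (hle ζ₀ hζ₀b)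
  have hseq : ∀ n : ℕ, ∃ ζ, ζ ∈ ball (0:ℂ) 1 ∧ M - 1/(n+1) < v ζ := by
    intro n
    have h1 : M - 1/(n+1) < M := by
      have : (0:ℝ) < 1/(n+1) := by positivity
      linarith
    obtain ⟨x, hx, hxlt⟩ := exists_lt_of_lt_csSup hSne h1
    obtain ⟨ζ, hζ, rfl⟩ := hx
    exact ⟨ζ, hζ, hxlt⟩
  choose ζs hζsb hζsv using hseq
  obtain ⟨z, hzcb, φ, hφ, hconv⟩ :=
    (isCompact_closedBall (0:ℂ) 1).tendsto_subseq (fun n => ball_subset_closedBall (hζsb n))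
  have hlarge : ∀ y : ℝ, y < M → ∀ᶠ n in atTop, y < v (ζs (φ n)) := by
    intro y hy
    obtain ⟨N, hN⟩ := exists_nat_one_div_lt (sub_pos.2 hy)
    filter_upwards [eventually_ge_atTop N] with n hn
    have hNn : (N:ℝ) ≤ φ n := by exact_mod_cast le_trans hn (hφ.id_le n)
    have h1 : (1:ℝ)/(φ n + 1) ≤ 1/(N+1) := by
      apply one_div_le_one_div_of_le (by positivity)
      linarith
    have := hζsv (φ n)
    linarith
  have hT : Filter.Tendsto (fun n => ζs (φ n)) atTop (nhdsWithin z (ball (0:ℂ) 1)) := by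
    apply tendsto_nhdsWithin_of_tendsto_nhds_of_eventually_within _ hconv
    exact Filter.Eventually.of_forall fun n => hζsb (φ n)
  have hzball : z ∈ ball (0:ℂ) 1 := by
    by_contra hz
    have hzs : z ∈ sphere (0:ℂ) 1 := by
      simp only [mem_closedBall] at hzcb
      simp only [mem_ball, not_lt] at hz
      exact mem_sphere.2 (le_antisymm hzcb hz)
    have hev := hbdry z hzs (M/2) (by linarith)
    obtain ⟨n, h1, h2⟩ := ((hT.eventually hev).and (hlarge (M/2) (by linarith))).exists
    linarith
  have hvzM : v z = M := by
    refine le_antisymm (hle z hzball) ?_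
    by_contra hvz
    push_neg at hvz
    have husz := husc z hzball ((v z + M)/2) (by linarith)
    obtain ⟨n, h1, h2⟩ := ((hT.eventually husz).and (hlarge ((v z + M)/2) (by linarith))).exists
    linarith
  -- openness of the set where the max is attained
  have hopen : ∀ c ∈ ball (0:ℂ) 1, v c = M →
      ∀ z' ∈ ball c ((1 - dist c 0)/2), v z' = M := by
    intro c hcb hcM z' hz'
    set r₀ : ℝ := (1 - dist c 0)/2 with hr₀def
    have hdc : dist c 0 < 1 := mem_ball.1 hcb
    have hr₀ : 0 < r₀ := by simp only [hr₀def]; linarith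
    have hcbsub : closedBall c r₀ ⊆ ball (0:ℂ) 1 := by
      intro w hw
      simp only [mem_closedBall] at hw
      have : dist w 0 ≤ dist w c + dist c 0 := dist_triangle w c 0
      simp only [mem_ball]
      simp only [hr₀def] at hw
      linarith
    have hz'b : z' ∈ ball (0:ℂ) 1 := hcbsub (ball_subset_closedBall hz')
    refine le_antisymm (hle z' hz'b) ?_
    by_contra hvz'
    push_neg at hvz'
    have hvz'M : v z' < M := hvz'
    have hz'c : z' ≠ c := by intro h; rw [h, hcM] at hvz'M; exact lt_irrefl _ hvz'M
    set r : ℝ := dist z' c with hrdef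
    have hr : 0 < r := dist_pos.2 hz'c
    have hrr₀ : r < r₀ := mem_ball.1 hz'
    have hcrsub : closedBall c r ⊆ ball (0:ℂ) 1 :=
      (closedBall_subset_closedBall hrr₀.le).trans hcbsub
    have hsub1 := hsub c r hr hcrsub
    set f : ℝ → ℝ := fun θ => v (circleMap c r θ) with hfdef
    have hfball : ∀ θ : ℝ, circleMap c r θ ∈ ball (0:ℂ) 1 := fun θ =>
      hcrsub (sphere_subset_closedBall (circleMap_mem_sphere c hr.le θ))
    have hfM : ∀ θ : ℝ, f θ ≤ M := fun θ => hle _ (hfball θ)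
    set y : ℝ := (v z' + M)/2 with hydef
    have hyM : y < M := by simp only [hydef]; linarith
    -- find a neighborhood where v < y
    have husz' := husc z' hz'b y (by simp only [hydef]; linarith)
    rw [eventually_nhdsWithin_iff, _root_.eventually_nhds_iff] at husz'
    obtain ⟨t, ht, htop, hz't⟩ := husz'
    -- the angle of z'
    set θ₀ : ℝ := if 0 ≤ Complex.arg (z' - c) then Complex.arg (z' - c)
      else Complex.arg (z' - c) + 2 * Real.pi with hθ₀def
    have habs : (‖z' - c‖ : ℝ) = r := by
      rw [hrdef, Complex.dist_eq]
    have hmap : circleMap c r θ₀ = z' := by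
      have key : (r : ℂ) * Complex.exp ((Complex.arg (z' - c) : ℂ) * Complex.I) = z' - c := by
        rw [← habs]; exact_mod_cast Complex.norm_mul_exp_arg_mul_I (z' - c)
      simp only [circleMap, hθ₀def]
      split_ifs with h
      · rw [key]; ring
      · push_cast
        rw [add_mul, Complex.exp_add, Complex.exp_two_pi_mul_I, mul_one, key]
        ring
    have hθ₀mem : 0 ≤ θ₀ ∧ θ₀ < 2 * Real.pi := by
      have h1 := Complex.arg_le_pi (z' - c)
      have h2 := Complex.neg_pi_lt_arg (z' - c)
      have hpi := Real.pi_pos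
      constructor <;> (simp only [hθ₀def]; split_ifs with h <;> linarith)
    -- find a small arc on which v < y
    have hpre : (circleMap c r) ⁻¹' t ∈ nhds θ₀ := by
      apply (continuous_circleMap c r).continuousAt.preimage_mem_nhds
      rw [hmap]; exact htop.mem_nhds hz't
    obtain ⟨δ, hδ, hδsub⟩ := Metric.mem_nhds_iff.1 hpre
    set b : ℝ := min (θ₀ + δ/2) (2 * Real.pi) with hbdef
    have hθ₀b : θ₀ < b := lt_min (by linarith) hθ₀mem.2
    have hb2π : b ≤ 2 * Real.pi := min_le_right _ _
    have harc : ∀ θ ∈ Set.Icc θ₀ b, f θ ≤ y := by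
      intro θ hθ
      have : θ ∈ Metric.ball θ₀ δ := by
        rw [Real.ball_eq_Ioo]
        constructor
        · have := hθ.1; linarith
        · have h1 := hθ.2
          have h2 : b ≤ θ₀ + δ/2 := min_le_left _ _
          linarith
      have := hδsub this
      exact (ht _ this (hfball θ)).le
    by_cases hi : IntervalIntegrable f MeasureTheory.volume 0 (2 * Real.pi)
    · have hmono : ∀ a' b' : ℝ, 0 ≤ a' → a' ≤ b' → b' ≤ 2 * Real.pi →
          IntervalIntegrable f MeasureTheory.volume a' b' := by
        intro a' b' h1 h2 h3
        apply hi.mono_set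
        rw [Set.uIcc_of_le h2, Set.uIcc_of_le (by positivity)]
        exact Set.Icc_subset_Icc h1 h3
      have hb0 : (0:ℝ) ≤ b := le_trans hθ₀mem.1 hθ₀b.le
      have hint1 := hmono 0 θ₀ le_rfl hθ₀mem.1 hθ₀mem.2.le
      have hint2 := hmono θ₀ b hθ₀mem.1 hθ₀b.le hb2π
      have hint3 := hmono b (2 * Real.pi) hb0 hb2π le_rfl
      have hint12 := hmono 0 b le_rfl hb0 hb2π
      have hI1 : ∫ θ in (0:ℝ)..θ₀, f θ ≤ θ₀ * M := by
        have h0 := intervalIntegral.integral_mono_on hθ₀mem.1 hint1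
          (intervalIntegrable_const (c := M)) (fun x _ => hfM x)
        rw [intervalIntegral.integral_const, smul_eq_mul] at h0
        linarith
      have hI2 : ∫ θ in θ₀..b, f θ ≤ (b - θ₀) * y := by
        have h0 := intervalIntegral.integral_mono_on hθ₀b.le hint2
          (intervalIntegrable_const (c := y)) harc
        rw [intervalIntegral.integral_const, smul_eq_mul] at h0
        linarith
      have hI3 : ∫ θ in b..(2 * Real.pi), f θ ≤ (2 * Real.pi - b) * M := by
        have h0 := intervalIntegral.integral_mono_on hb2π hint3
          (intervalIntegrable_const (c := M)) (fun x _ => hfM x)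
        rw [intervalIntegral.integral_const, smul_eq_mul] at h0
        linarith
      have hsplit : ∫ θ in (0:ℝ)..(2 * Real.pi), f θ =
          (∫ θ in (0:ℝ)..θ₀, f θ) + (∫ θ in θ₀..b, f θ) + (∫ θ in b..(2 * Real.pi), f θ) := by
        rw [intervalIntegral.integral_add_adjacent_intervals hint1 hint2,
          intervalIntegral.integral_add_adjacent_intervals hint12 hint3]
      have htot : ∫ θ in (0:ℝ)..(2 * Real.pi), f θ < 2 * Real.pi * M := by
        rw [hsplit]
        have : θ₀ * M + (b - θ₀) * y + (2 * Real.pi - b) * M < 2 * Real.pi * M := by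
          nlinarith [hθ₀b, hyM]
        linarith
      have hca : circleAvg v c r < M := by
        unfold circleAvg
        have h2π : (0:ℝ) < 2 * Real.pi := by positivity
        have heq : (∫ θ in (0:ℝ)..(2 * Real.pi), v (c + r * Complex.exp (θ * Complex.I)))
            = ∫ θ in (0:ℝ)..(2 * Real.pi), f θ := rfl
        rw [heq]
        rw [div_mul_eq_mul_div, one_mul, div_lt_iff₀ h2π]
        linarith [htot]
      rw [hcM] at hsub1
      linarith
    · have : circleAvg v c r = 0 := by
        unfold circleAvg
        have heq : (∫ θ in (0:ℝ)..(2 * Real.pi), v (c + r * Complex.exp (θ * Complex.I)))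
            = ∫ θ in (0:ℝ)..(2 * Real.pi), f θ := rfl
        rw [heq, intervalIntegral.integral_undef hi, mul_zero]
      rw [this, hcM] at hsub1
      linarith
  -- clopen argument on the connected ball
  set A : Set ℂ := {ζ | ζ ∈ ball (0:ℂ) 1 ∧ v ζ = M} with hAdef
  have hAopen : IsOpen A := by
    rw [Metric.isOpen_iff]
    rintro c ⟨hcb, hcM⟩
    refine ⟨(1 - dist c 0)/2, by have := mem_ball.1 hcb; simp at this ⊢; linarith, ?_⟩
    intro x hx
    have hdc : dist c 0 < 1 := mem_ball.1 hcb
    have hxb : x ∈ ball (0:ℂ) 1 := by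
      have h1 : dist x c < (1 - dist c 0)/2 := mem_ball.1 hx
      have : dist x 0 ≤ dist x c + dist c 0 := dist_triangle x c 0
      simp only [mem_ball]; linarith
    exact ⟨hxb, hopen c hcb hcM x hx⟩
  set V : Set ℂ := {ζ | ∃ t, IsOpen t ∧ ζ ∈ t ∧ ∀ x ∈ t, x ∈ ball (0:ℂ) 1 → v x < M} with hVdef
  have hVopen : IsOpen V := by
    rw [isOpen_iff_mem_nhds]
    rintro ζ ⟨t, htop, hζt, ht⟩
    rw [_root_.mem_nhds_iff]
    exact ⟨t, fun x hx => ⟨t, htop, hx, ht⟩, htop, hζt⟩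
  have hcover : ball (0:ℂ) 1 ⊆ A ∪ V := by
    intro ζ hζ
    by_cases h : v ζ = M
    · exact Or.inl ⟨hζ, h⟩
    · right
      have hlt : v ζ < M := lt_of_le_of_ne (hle ζ hζ) h
      have := husc ζ hζ M hlt
      rw [eventually_nhdsWithin_iff, _root_.eventually_nhds_iff] at this
      obtain ⟨t, ht, htop, hζt⟩ := this
      exact ⟨t, htop, hζt, ht⟩
  have hdisj : ball (0:ℂ) 1 ∩ (A ∩ V) = ∅ := by
    ext x
    simp only [Set.mem_inter_iff, Set.mem_empty_iff_false, iff_false]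
    rintro ⟨hxb, ⟨_, hxM⟩, ⟨t, htop, hxt, ht⟩⟩
    exact absurd hxM (ne_of_lt (ht x hxt hxb))
  have hprec : IsPreconnected (ball (0:ℂ) 1) := (convex_ball (0:ℂ) 1).isPreconnected
  have hVempty : ¬ (ball (0:ℂ) 1 ∩ V).Nonempty := by
    intro hVne
    obtain ⟨x, hx⟩ := hprec A V hAopen hVopen hcover ⟨z, hzball, hzball, hvzM⟩ hVne
    rw [hdisj] at hx
    exact hx
  have hconst : ∀ ζ ∈ ball (0:ℂ) 1, v ζ = M := by
    intro ζ hζ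
    rcases hcover hζ with h | h
    · exact h.2
    · exact absurd ⟨ζ, hζ, h⟩ hVempty
  have h1s : (1:ℂ) ∈ sphere (0:ℂ) 1 := by simp
  have hev := hbdry 1 h1s (M/2) (by linarith)
  have hnebot : (nhdsWithin (1:ℂ) (ball (0:ℂ) 1)).NeBot := by
    rw [← mem_closure_iff_nhdsWithin_neBot, closure_ball (0:ℂ) one_ne_zero]
    simp
  obtain ⟨x, hx1, hx2⟩ := (hev.and (eventually_mem_nhdsWithin)).exists
  have := hconst x hx2
  linarith

section helpers
variable {ζ : ℂ}

lemma habs_lt (h : ζ ∈ ball (0:ℂ) 1) : ‖ζ‖ < 1 := by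
  simpa [Complex.dist_eq] using mem_ball.1 h

lemma hre_lt (h : ζ ∈ ball (0:ℂ) 1) : |ζ.re| < 1 :=
  lt_of_le_of_lt (Complex.abs_re_le_norm ζ) (habs_lt h)

lemma hone_sub_re (h : ζ ∈ ball (0:ℂ) 1) : 0 < ((1:ℂ) - ζ).re := by
  have := (abs_lt.1 (hre_lt h)).2
  simp [Complex.sub_re]; linarith

lemma hone_add_re (h : ζ ∈ ball (0:ℂ) 1) : 0 < ((1:ℂ) + ζ).re := by
  have := (abs_lt.1 (hre_lt h)).1
  simp [Complex.add_re]; linarith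

lemma hone_sub_ne (h : ζ ∈ ball (0:ℂ) 1) : (1:ℂ) - ζ ≠ 0 := by
  intro h0; have := hone_sub_re h; rw [h0] at this; simp at this

lemma hone_add_ne (h : ζ ∈ ball (0:ℂ) 1) : (1:ℂ) + ζ ≠ 0 := by
  intro h0; have := hone_add_re h; rw [h0] at this; simp at this

lemma g_im_eq (ζ : ℂ) : (Complex.I * (1 - ζ) / (1 + ζ)).im
    = (1 - Complex.normSq ζ) / Complex.normSq (1 + ζ) := by
  rw [Complex.div_im]
  simp [Complex.normSq_apply, Complex.mul_re, Complex.mul_im, Complex.sub_re, Complex.sub_im,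
    Complex.add_re, Complex.add_im]
  ring

lemma g_re_eq (ζ : ℂ) : (Complex.I * (1 - ζ) / (1 + ζ)).re
    = (2 * ζ.im) / Complex.normSq (1 + ζ) := by
  rw [Complex.div_re]
  simp [Complex.normSq_apply, Complex.mul_re, Complex.mul_im, Complex.sub_re, Complex.sub_im,
    Complex.add_re, Complex.add_im]
  ring

lemma hg_im (h : ζ ∈ ball (0:ℂ) 1) : 0 < (Complex.I * (1 - ζ) / (1 + ζ)).im := by
  have hns : 0 < Complex.normSq (1 + ζ) := Complex.normSq_pos.2 (hone_add_ne h)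
  have hnζ : Complex.normSq ζ < 1 := by
    rw [← Complex.sq_norm]
    nlinarith [habs_lt h, norm_nonneg ζ]
  rw [g_im_eq]
  exact div_pos (by linarith) hns

lemma harg_nonneg (h : ζ ∈ ball (0:ℂ) 1) :
    0 ≤ Complex.arg (Complex.I * (1 - ζ) / (1 + ζ)) :=
  Complex.arg_nonneg_iff.2 (hg_im h).le

lemma homega_bounds (h : ζ ∈ ball (0:ℂ) 1) : 0 ≤ omegaUp ζ + 1 ∧ omegaUp ζ + 1 ≤ 1 := by
  have hπ : 0 < Real.pi := Real.pi_pos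
  have h1 := harg_nonneg h
  have h2 := Complex.arg_le_pi (Complex.I * (1 - ζ) / (1 + ζ))
  unfold omegaUp
  constructor
  · have : 0 ≤ (1 / Real.pi) * Complex.arg (Complex.I * (1 - ζ) / (1 + ζ)) := by positivity
    linarith
  · rw [sub_add_cancel, div_mul_eq_mul_div, one_mul, div_le_one hπ]; exact h2

lemma hlog1_nonneg (h : ζ ∈ ball (0:ℂ) 1) : 0 ≤ Real.log (2 / ‖1 - ζ‖) := by
  have h1 : 0 < ‖1 - ζ‖ := norm_pos_iff.mpr (hone_sub_ne h)
  have h2 : ‖1 - ζ‖ ≤ 2 := by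
    calc ‖1 - ζ‖ ≤ ‖(1:ℂ)‖ + ‖ζ‖ := by
          simpa [sub_eq_add_neg] using norm_add_le 1 (-ζ)
      _ ≤ 2 := by simp; linarith [(habs_lt h).le]
  exact Real.log_nonneg ((one_le_div h1).2 h2)

lemma hlog2_nonneg (h : ζ ∈ ball (0:ℂ) 1) : 0 ≤ Real.log (2 / ‖1 + ζ‖) := by
  have h1 : 0 < ‖1 + ζ‖ := norm_pos_iff.mpr (hone_add_ne h)
  have h2 : ‖1 + ζ‖ ≤ 2 := by
    calc ‖1 + ζ‖ ≤ ‖(1:ℂ)‖ + ‖ζ‖ := norm_add_le 1 ζ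
      _ ≤ 2 := by simp; linarith [(habs_lt h).le]
  exact Real.log_nonneg ((one_le_div h1).2 h2)

end helpers

noncomputable def Fh (C ε : ℝ) : ℂ → ℂ := fun ζ =>
  (((C / Real.pi : ℝ) : ℂ)) * (-Complex.I) * Complex.log (Complex.I * (1 - ζ) / (1 + ζ))
    + (ε:ℝ) * Complex.log (2 / (1 - ζ)) + (ε:ℝ) * Complex.log (2 / (1 + ζ))

lemma Fh_re (C ε : ℝ) {ζ : ℂ} (h : ζ ∈ ball (0:ℂ) 1) :
    (Fh C ε ζ).re = C * (omegaUp ζ + 1)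
      + ε * Real.log (2 / ‖1 - ζ‖) + ε * Real.log (2 / ‖1 + ζ‖) := by
  have hπ : Real.pi ≠ 0 := Real.pi_ne_zero
  have e1 : ‖(2:ℂ) / (1 - ζ)‖ = 2 / ‖1 - ζ‖ := by
    rw [norm_div]; norm_num
  have e2 : ‖(2:ℂ) / (1 + ζ)‖ = 2 / ‖1 + ζ‖ := by
    rw [norm_div]; norm_num
  unfold Fh
  rw [Complex.add_re, Complex.add_re]
  rw [Complex.mul_re ((ε:ℝ):ℂ), Complex.mul_re ((ε:ℝ):ℂ)]
  simp only [Complex.ofReal_re, Complex.ofReal_im, zero_mul, sub_zero, Complex.log_re, e1, e2]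
  have : ((((C / Real.pi : ℝ) : ℂ)) * (-Complex.I)
      * Complex.log (Complex.I * (1 - ζ) / (1 + ζ))).re
      = (C / Real.pi) * Complex.arg (Complex.I * (1 - ζ) / (1 + ζ)) := by
    rw [mul_assoc, Complex.mul_re]
    simp [Complex.log_im]
  rw [this]
  unfold omegaUp
  have : (1:ℝ)/Real.pi * Complex.arg (Complex.I * (1 - ζ) / (1 + ζ)) - 1 + 1
      = (1/Real.pi) * Complex.arg (Complex.I * (1 - ζ) / (1 + ζ)) := by ring
  rw [this]
  field_simp

lemma Fh_diff (C ε : ℝ) : DifferentiableOn ℂ (Fh C ε) (ball (0:ℂ) 1) := by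
  intro ζ hζ
  apply DifferentiableAt.differentiableWithinAt
  have hne1 : (1:ℂ) - ζ ≠ 0 := hone_sub_ne hζ
  have hne2 : (1:ℂ) + ζ ≠ 0 := hone_add_ne hζ
  have hd1 : DifferentiableAt ℂ (fun z : ℂ => Complex.I * (1 - z) / (1 + z)) ζ := by
    apply DifferentiableAt.div
    · exact (differentiableAt_const _).mul ((differentiableAt_const _).sub differentiableAt_id)
    · exact (differentiableAt_const _).add differentiableAt_id
    · exact hne2
  have hd2 : DifferentiableAt ℂ (fun z : ℂ => (2:ℂ) / (1 - z)) ζ := by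
    apply DifferentiableAt.div (differentiableAt_const _)
      ((differentiableAt_const _).sub differentiableAt_id) hne1
  have hd3 : DifferentiableAt ℂ (fun z : ℂ => (2:ℂ) / (1 + z)) ζ := by
    apply DifferentiableAt.div (differentiableAt_const _)
      ((differentiableAt_const _).add differentiableAt_id) hne2
  have hs1 : Complex.I * (1 - ζ) / (1 + ζ) ∈ Complex.slitPlane :=
    Complex.mem_slitPlane_iff.2 (Or.inr (hg_im hζ).ne')
  have hs2 : (2:ℂ) / (1 - ζ) ∈ Complex.slitPlane := by
    refine Complex.mem_slitPlane_iff.2 (Or.inl ?_)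
    have hre := hone_sub_re hζ
    have hns : 0 < Complex.normSq (1 - ζ) := Complex.normSq_pos.2 hne1
    have heq : ((2:ℂ) / (1 - ζ)).re = 2 * ((1:ℂ) - ζ).re / Complex.normSq (1 - ζ) := by
      rw [Complex.div_re]; simp
    rw [heq]; positivity
  have hs3 : (2:ℂ) / (1 + ζ) ∈ Complex.slitPlane := by
    refine Complex.mem_slitPlane_iff.2 (Or.inl ?_)
    have hre := hone_add_re hζ
    have hns : 0 < Complex.normSq (1 + ζ) := Complex.normSq_pos.2 hne2
    have heq : ((2:ℂ) / (1 + ζ)).re = 2 * ((1:ℂ) + ζ).re / Complex.normSq (1 + ζ) := by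
      rw [Complex.div_re]; simp
    rw [heq]; positivity
  apply DifferentiableAt.add
  apply DifferentiableAt.add
  · exact (differentiableAt_const _).mul (hd1.clog hs1)
  · exact (differentiableAt_const _).mul (hd2.clog hs2)
  · exact (differentiableAt_const _).mul (hd3.clog hs3)

/-- Two constants theorem (estimate (5.1)): if u is subharmonic on 𝔻, u ≤ C on the
closed disc, and limsup u ≤ 0 at every point of the open upper semicircle, then
u ≤ C·(ω + 1) on 𝔻. -/
theorem stmt_10 (u : ℂ → ℝ) (C : ℝ)
    (hsh : SubharmonicOn' u (Metric.ball (0:ℂ) 1))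
    (husc : UpperSemicontinuousOn u (Metric.closedBall (0:ℂ) 1))
    (hbd : ∀ ζ ∈ Metric.closedBall (0:ℂ) 1, u ζ ≤ C)
    (hbdry : ∀ φ ∈ Set.Ioo (0:ℝ) Real.pi,
      Filter.limsup u (nhdsWithin (Complex.exp (φ * Complex.I)) (Metric.ball 0 1)) ≤ 0) :
    ∀ ζ ∈ Metric.ball (0:ℂ) 1, u ζ ≤ C * (omegaUp ζ + 1) := by
  intro ζ hζ
  by_cases hC : C ≤ 0
  · have hb := (homega_bounds hζ).2
    have h1 : u ζ ≤ C := hbd ζ (ball_subset_closedBall hζ)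
    have h2 : C * 1 ≤ C * (omegaUp ζ + 1) := mul_le_mul_of_nonpos_left hb hC
    linarith
  push_neg at hC
  have key : ∀ ε : ℝ, 0 < ε → u ζ - C * (omegaUp ζ + 1)
      ≤ ε * (Real.log (2 / ‖1 - ζ‖) + Real.log (2 / ‖1 + ζ‖)) := by
    intro ε hε
    set h : ℂ → ℝ := fun z => (Fh C ε z).re with hhdef
    set v : ℂ → ℝ := fun z => u z - h z with hvdef
    have hFdiff := Fh_diff C ε
    have hconth : ContinuousOn h (ball (0:ℂ) 1) :=
      Complex.continuous_re.comp_continuousOn hFdiff.continuousOn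
    have hpos : ∀ z ∈ ball (0:ℂ) 1, 0 ≤ h z := by
      intro z hz
      have hre := Fh_re C ε hz
      have h1 := (homega_bounds hz).1
      have h2 := hlog1_nonneg hz
      have h3 := hlog2_nonneg hz
      have h4 : 0 ≤ C * (omegaUp z + 1) := mul_nonneg hC.le h1
      have h5 : 0 ≤ ε * Real.log (2 / ‖1 - z‖) := mul_nonneg hε.le h2
      have h6 : 0 ≤ ε * Real.log (2 / ‖1 + z‖) := mul_nonneg hε.le h3
      simp only [hhdef]; rw [hre]; linarith
    have hhm : ∀ c r, 0 < r → closedBall c r ⊆ ball (0:ℂ) 1 → h c = circleAvg h c r :=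
      fun c r hr hsb => holo_mean hr (hFdiff.mono hsb)
    have husc' : UpperSemicontinuousOn v (ball (0:ℂ) 1) := by
      intro z hz y hy
      have h1 := hsh.1 z hz (u z + (y - v z)/2) (by simp only [hvdef] at hy ⊢; linarith)
      have h2 : ∀ᶠ w in nhdsWithin z (ball (0:ℂ) 1), h z - (y - v z)/2 < h w := by
        have := (hconth z hz).tendsto
        exact this.eventually (eventually_gt_nhds (by simp only [hvdef] at hy; linarith))
      filter_upwards [h1, h2] with w hw1 hw2
      simp only [hvdef] at hy ⊢
      linarith
    have hsub' : ∀ c r, 0 < r → closedBall c r ⊆ ball (0:ℂ) 1 → v c ≤ circleAvg v c r := by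
      intro c r hr hsb
      have hu := hsh.2 c r hr hsb
      have hhm' := hhm c r hr hsb
      have hih : IntervalIntegrable (fun θ : ℝ => h (c + r * Complex.exp (θ * Complex.I)))
          MeasureTheory.volume 0 (2 * Real.pi) := by
        apply ContinuousOn.intervalIntegrable
        apply hconth.comp (continuous_circleMap c r).continuousOn
        intro θ _
        exact hsb (sphere_subset_closedBall (circleMap_mem_sphere c hr.le θ))
      by_cases hi : IntervalIntegrable (fun θ : ℝ => u (c + r * Complex.exp (θ * Complex.I)))
          MeasureTheory.volume 0 (2 * Real.pi)
      · have heq : circleAvg v c r = circleAvg u c r - circleAvg h c r := by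
          unfold circleAvg
          rw [← mul_sub, ← intervalIntegral.integral_sub hi hih]
        rw [heq, ← hhm']
        simp only [hvdef]
        linarith
      · have hnv : ¬ IntervalIntegrable (fun θ : ℝ => v (c + r * Complex.exp (θ * Complex.I)))
            MeasureTheory.volume 0 (2 * Real.pi) := by
          intro hvint
          apply hi
          have := hvint.add hih
          have heq : (fun θ : ℝ => v (c + r * Complex.exp (θ * Complex.I))
              + h (c + r * Complex.exp (θ * Complex.I)))
              = fun θ : ℝ => u (c + r * Complex.exp (θ * Complex.I)) := by
            funext θ; simp only [hvdef]; ring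
          rwa [heq] at this
        have h0 : circleAvg v c r = 0 := by
          unfold circleAvg
          rw [intervalIntegral.integral_undef hnv, mul_zero]
        have hu0 : circleAvg u c r = 0 := by
          unfold circleAvg
          rw [intervalIntegral.integral_undef hi, mul_zero]
        rw [h0]
        rw [hu0] at hu
        have hc0 : 0 ≤ h c := hpos c (hsb (mem_closedBall_self hr.le))
        simp only [hvdef]
        linarith
    have hB' : ∀ z ∈ ball (0:ℂ) 1, v z ≤ C := by
      intro z hz
      have := hbd z (ball_subset_closedBall hz)
      have := hpos z hz
      simp only [hvdef]
      linarith
    have hbdry' : ∀ τ ∈ sphere (0:ℂ) 1, ∀ m : ℝ, 0 < m →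
        ∀ᶠ w in nhdsWithin τ (ball (0:ℂ) 1), v w < m := by
      intro τ hτ m hm
      have habsτ : ‖τ‖ = 1 := by
        simpa [Complex.dist_eq] using mem_sphere.1 hτ
      have hτne0 : τ ≠ 0 := by
        intro h0; rw [h0] at habsτ; simp at habsτ
      rcases lt_trichotomy τ.im 0 with him | him | him
      · -- lower semicircle : ω → 0 boundary value 1
        have hne2 : (1:ℂ) + τ ≠ 0 := by
          intro h0
          have : τ = -1 := by linear_combination h0
          rw [this] at him; simp at him
        have hns : 0 < Complex.normSq (1 + τ) := Complex.normSq_pos.2 hne2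
        have hnsq1 : Complex.normSq τ = 1 := by
          rw [← Complex.sq_norm, habsτ]; norm_num
        have hgre : (Complex.I * (1 - τ) / (1 + τ)).re < 0 := by
          rw [g_re_eq]
          exact div_neg_of_neg_of_pos (by linarith) hns
        have hgim : (Complex.I * (1 - τ) / (1 + τ)).im = 0 := by
          rw [g_im_eq, hnsq1]; simp
        have hctsm : ContinuousAt (fun z : ℂ => Complex.I * (1 - z) / (1 + z)) τ := by
          apply ContinuousAt.div
          · exact (continuousAt_const.mul (continuousAt_const.sub continuousAt_id))
          · exact continuousAt_const.add continuousAt_id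
          · exact hne2
        have hmt : Filter.Tendsto (fun z : ℂ => Complex.I * (1 - z) / (1 + z))
            (nhdsWithin τ (ball (0:ℂ) 1))
            (nhdsWithin (Complex.I * (1 - τ) / (1 + τ)) {w : ℂ | 0 ≤ w.im}) := by
          apply tendsto_nhdsWithin_of_tendsto_nhds_of_eventually_within
          · exact hctsm.continuousWithinAt
          · exact eventually_mem_nhdsWithin.mono fun z hz => (hg_im hz).le
        have htendarg : Filter.Tendsto
            (fun z : ℂ => Complex.arg (Complex.I * (1 - z) / (1 + z)))
            (nhdsWithin τ (ball (0:ℂ) 1)) (nhds Real.pi) :=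
          (Complex.tendsto_arg_nhdsWithin_im_nonneg_of_re_neg_of_im_zero hgre hgim).comp hmt
        have hπ : 0 < Real.pi := Real.pi_pos
        have hlt : Real.pi - Real.pi * m / C < Real.pi := by
          have : 0 < Real.pi * m / C := by positivity
          linarith
        have hev := htendarg.eventually (eventually_gt_nhds hlt)
        filter_upwards [hev, eventually_mem_nhdsWithin] with z hz1 hz2
        have l1 := hlog1_nonneg hz2
        have l2 := hlog2_nonneg hz2
        have hui := hbd z (ball_subset_closedBall hz2)
        have hωeq : C * (omegaUp z + 1)
            = C / Real.pi * Complex.arg (Complex.I * (1 - z) / (1 + z)) := by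
          unfold omegaUp
          field_simp
          ring
        have harg : C / Real.pi * (Real.pi - Real.pi * m / C)
            < C / Real.pi * Complex.arg (Complex.I * (1 - z) / (1 + z)) := by
          apply mul_lt_mul_of_pos_left hz1 (by positivity)
        have hid : C / Real.pi * (Real.pi - Real.pi * m / C) = C - m := by
          field_simp
        rw [hid] at harg
        have hre := Fh_re C ε hz2
        have h5 : 0 ≤ ε * Real.log (2 / ‖1 - z‖) := mul_nonneg hε.le l1
        have h6 : 0 ≤ ε * Real.log (2 / ‖1 + z‖) := mul_nonneg hε.le l2
        simp only [hvdef, hhdef]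
        rw [hre, hωeq]
        linarith
      · -- corners τ = ±1
        have hre2 : τ.re = 1 ∨ τ.re = -1 := by
          have h1 : τ.re ^ 2 + τ.im ^ 2 = 1 := by
            have hsq := Complex.sq_norm τ
            rw [habsτ, Complex.normSq_apply] at hsq
            nlinarith [hsq]
          rw [him] at h1
          have h2 : (τ.re - 1) * (τ.re + 1) = 0 := by nlinarith
          rcases mul_eq_zero.1 h2 with h | h
          · left; linarith
          · right; linarith
        have hcorner : ∀ w₀ : ℂ, τ = w₀ → (∀ z ∈ ball (0:ℂ) 1, w₀ - z ≠ 0) →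
            (∀ z ∈ ball (0:ℂ) 1, 0 ≤ Real.log (2 / ‖w₀ - z‖)) →
            (∀ z ∈ ball (0:ℂ) 1,
              v z ≤ C - ε * Real.log (2 / ‖w₀ - z‖)) →
            ∀ᶠ w in nhdsWithin τ (ball (0:ℂ) 1), v w < m := by
          intro w₀ hτw hnz _ hvbound
          have htabs : Filter.Tendsto (fun z : ℂ => ‖w₀ - z‖)
              (nhdsWithin τ (ball (0:ℂ) 1)) (nhdsWithin 0 (Set.Ioi (0:ℝ))) := by
            apply tendsto_nhdsWithin_of_tendsto_nhds_of_eventually_within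
            · have hcont : Continuous (fun z : ℂ => ‖w₀ - z‖) :=
                continuous_norm.comp (continuous_const.sub continuous_id)
              have h0 : Filter.Tendsto (fun z : ℂ => ‖w₀ - z‖)
                  (nhdsWithin τ (ball (0:ℂ) 1)) (nhds (‖w₀ - τ‖)) :=
                (hcont.tendsto τ).mono_left nhdsWithin_le_nhds
              have h00 : ‖w₀ - τ‖ = 0 := by rw [hτw]; simp
              rwa [h00] at h0
            · exact eventually_mem_nhdsWithin.mono fun z hz =>
                norm_pos_iff.mpr (sub_ne_zero.2 (fun hh => hnz z hz (by rw [hh]; ring_nf)))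
          have ht2 : Filter.Tendsto (fun x : ℝ => 2 / x)
              (nhdsWithin 0 (Set.Ioi (0:ℝ))) atTop := by
            have := tendsto_inv_nhdsGT_zero (𝕜 := ℝ)
            have h2 := this.const_mul_atTop (r := (2:ℝ)) (by norm_num)
            simpa [div_eq_mul_inv] using h2
          have hlogt : Filter.Tendsto (fun z : ℂ => Real.log (2 / ‖w₀ - z‖))
              (nhdsWithin τ (ball (0:ℂ) 1)) atTop :=
            Real.tendsto_log_atTop.comp (ht2.comp htabs)
          have hev := hlogt.eventually_gt_atTop ((C - m) / ε)
          filter_upwards [hev, eventually_mem_nhdsWithin] with z h1 h2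
          have h3 := hvbound z h2
          have h4 : C - m < ε * Real.log (2 / ‖w₀ - z‖) := by
            rw [div_lt_iff₀ hε, mul_comm] at h1
            exact h1
          have h5 := lt_of_le_of_lt h3 (sub_lt_sub_left h4 C)
          have h6 : C - (C - m) = m := by ring
          rwa [h6] at h5
        rcases hre2 with h | h
        · have hτ1 : τ = 1 := Complex.ext (by simp [h]) (by simp [him])
          apply hcorner 1 hτ1
          · intro z hz; simpa [sub_ne_zero] using (hone_sub_ne hz)
          · intro z hz; exact hlog1_nonneg hz
          · intro z hz
            have hre := Fh_re C ε hz
            have h1 := (homega_bounds hz).1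
            have h4 : 0 ≤ C * (omegaUp z + 1) := mul_nonneg hC.le h1
            have h6 : 0 ≤ ε * Real.log (2 / ‖1 + z‖) :=
              mul_nonneg hε.le (hlog2_nonneg hz)
            have hui := hbd z (ball_subset_closedBall hz)
            simp only [hvdef, hhdef]
            rw [hre]
            linarith
        · have hτ1 : τ = -1 := Complex.ext (by simp [h]) (by simp [him])
          apply hcorner (-1) hτ1
          · intro z hz
            have := hone_add_ne hz
            intro h0
            apply this
            linear_combination -h0
          · intro z hz
            have : (-1 : ℂ) - z = -(1 + z) := by ring
            rw [this, norm_neg]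
            exact hlog2_nonneg hz
          · intro z hz
            have hre := Fh_re C ε hz
            have h1 := (homega_bounds hz).1
            have h4 : 0 ≤ C * (omegaUp z + 1) := mul_nonneg hC.le h1
            have h6 : 0 ≤ ε * Real.log (2 / ‖1 - z‖) :=
              mul_nonneg hε.le (hlog1_nonneg hz)
            have hui := hbd z (ball_subset_closedBall hz)
            have habsneg : ‖(-1:ℂ) - z‖ = ‖1 + z‖ := by
              have : (-1 : ℂ) - z = -(1 + z) := by ring
              rw [this, norm_neg]
            simp only [hvdef, hhdef]
            rw [hre, habsneg]
            linarith
      · -- upper semicircle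
        set φ := Complex.arg τ with hφdef
        have hφ0 : 0 < φ := by
          rcases lt_or_eq_of_le (Complex.arg_nonneg_iff.2 him.le) with h | h
          · exact h
          · exfalso
            have := Complex.arg_eq_zero_iff.1 h.symm
            exact absurd this.2 him.ne'
        have hφπ : φ < Real.pi := by
          rcases lt_or_eq_of_le (Complex.arg_le_pi τ) with h | h
          · exact h
          · exfalso
            have := Complex.arg_eq_pi_iff.1 h
            exact absurd this.2 him.ne'
        have hexp : Complex.exp ((φ:ℂ) * Complex.I) = τ := by
          have := Complex.norm_mul_exp_arg_mul_I τ
          rw [habsτ] at this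
          simpa using this
        have hl := hbdry φ ⟨hφ0, hφπ⟩
        rw [hexp] at hl
        have hbdd : Filter.IsBoundedUnder (· ≤ ·) (nhdsWithin τ (ball (0:ℂ) 1)) u :=
          Filter.isBoundedUnder_of_eventually_le (a := C)
            (eventually_mem_nhdsWithin.mono fun z hz => hbd z (ball_subset_closedBall hz))
        have hev := Filter.eventually_lt_of_limsup_lt (lt_of_le_of_lt hl hm) hbdd
        filter_upwards [hev, eventually_mem_nhdsWithin] with z h1 h2
        have := hpos z h2
        simp only [hvdef]
        linarith
    have := maxp husc' hsub' hB' hbdry' ζ hζ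
    have hre := Fh_re C ε hζ
    simp only [hvdef, hhdef] at this
    rw [hre] at this
    linarith
  set K : ℝ := Real.log (2 / ‖1 - ζ‖) + Real.log (2 / ‖1 + ζ‖) with hK
  have hK0 : 0 ≤ K := add_nonneg (hlog1_nonneg hζ) (hlog2_nonneg hζ)
  have hfinal : u ζ - C * (omegaUp ζ + 1) ≤ 0 := by
    by_contra hp
    push_neg at hp
    set d : ℝ := u ζ - C * (omegaUp ζ + 1) with hd
    have h1 := key (d / (2 * K + 2)) (by positivity)
    have h2 : d / (2 * K + 2) * K ≤ d / 2 := by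
      rw [div_mul_eq_mul_div, div_le_div_iff₀ (by positivity) (by norm_num)]
      nlinarith
    linarith
  linarith
end
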